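/- arXiv:1710.02205 — 2 statements merged into one kernel-verified Lean document; each statement's English description precedes it below -/
import Mathlib

section
/- For measurable sets U, V ⊆ ℝ^N, a nonnegative measurable symmetric kernel K, and measurable functions u, v : ℝ^N → ℝ, the kinetic energy K(w; U; V) := (1/2)∫_U∫_V |w(x)-w(y)|² K(x,y) dx dy satisfies the submodularity inequality K(min{u,v}; U; V) + K(max{u,v}; U; V) ≤ K(u; U; V) + K(v; U; V). -/
open MeasureTheory ENNReal

/-- The nonlocal kinetic energy `K(w;U;V) = (1/2)∫_U∫_V |w(x)-w(y)|² K(x,y) dx dy`. -/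
noncomputable def kineticEnergy {N : ℕ} (K : (Fin N → ℝ) → (Fin N → ℝ) → ℝ≥0∞)
    (w : (Fin N → ℝ) → ℝ) (U V : Set (Fin N → ℝ)) : ℝ≥0∞ :=
  (1/2) * ∫⁻ x in U, ∫⁻ y in V, ENNReal.ofReal (|w x - w y|^2) * K x y

lemma key_ineq (a b c d : ℝ) :
    |min a c - min b d|^2 + |max a c - max b d|^2 ≤ |a - b|^2 + |c - d|^2 := by
  simp only [sq_abs]
  rcases le_total a c with h1 | h1 <;> rcases le_total b d with h2 | h2 <;>
    simp only [min_eq_left, min_eq_right, max_eq_left, max_eq_right, h1, h2] <;>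
    nlinarith [sq_nonneg (a - b), sq_nonneg (c - d), sq_nonneg (a - d), sq_nonneg (c - b),
      mul_nonneg (sub_nonneg.2 h1) (sub_nonneg.2 h2)]

theorem stmt0 {N : ℕ} (hN : 1 ≤ N) (U V : Set (Fin N → ℝ))
    (hU : MeasurableSet U) (hV : MeasurableSet V)
    (K : (Fin N → ℝ) → (Fin N → ℝ) → ℝ≥0∞)
    (hK : Measurable (Function.uncurry K))
    (hKsym : ∀ x y, K x y = K y x)
    (u v : (Fin N → ℝ) → ℝ) (hu : Measurable u) (hv : Measurable v) :
    kineticEnergy K (fun x => min (u x) (v x)) U V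
      + kineticEnergy K (fun x => max (u x) (v x)) U V
      ≤ kineticEnergy K u U V + kineticEnergy K v U V := by
  classical
  set f : ((Fin N → ℝ) → ℝ) → (Fin N → ℝ) → (Fin N → ℝ) → ℝ≥0∞ :=
    fun w x y => ENNReal.ofReal (|w x - w y|^2) * K x y with hf
  have hmeas : ∀ w : (Fin N → ℝ) → ℝ, Measurable w →
      Measurable (fun p : (Fin N → ℝ) × (Fin N → ℝ) => f w p.1 p.2) := by
    intro w hw
    exact ((ENNReal.measurable_ofReal.comp
      (((hw.comp measurable_fst).sub (hw.comp measurable_snd)).abs.pow_const 2)).mul hK)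
  have hmin : Measurable (fun x => min (u x) (v x)) := hu.min hv
  have hmax : Measurable (fun x => max (u x) (v x)) := hu.max hv
  have inner : ∀ (w₁ w₂ : (Fin N → ℝ) → ℝ), Measurable w₁ → Measurable w₂ →
      ∀ x, (∫⁻ y in V, f w₁ x y) + (∫⁻ y in V, f w₂ x y)
        = ∫⁻ y in V, (f w₁ x y + f w₂ x y) := by
    intro w₁ w₂ h₁ h₂ x
    exact (lintegral_add_left ((hmeas w₁ h₁).comp measurable_prodMk_left) _).symm
  have outer : ∀ (w₁ w₂ : (Fin N → ℝ) → ℝ), Measurable w₁ → Measurable w₂ →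
      (∫⁻ x in U, ∫⁻ y in V, f w₁ x y) + (∫⁻ x in U, ∫⁻ y in V, f w₂ x y)
        = ∫⁻ x in U, ((∫⁻ y in V, f w₁ x y) + (∫⁻ y in V, f w₂ x y)) := by
    intro w₁ w₂ h₁ h₂
    exact (lintegral_add_left ((hmeas w₁ h₁).lintegral_prod_right') _).symm
  have main : (∫⁻ x in U, ∫⁻ y in V, f (fun z => min (u z) (v z)) x y)
      + (∫⁻ x in U, ∫⁻ y in V, f (fun z => max (u z) (v z)) x y)
      ≤ (∫⁻ x in U, ∫⁻ y in V, f u x y) + (∫⁻ x in U, ∫⁻ y in V, f v x y) := by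
    rw [outer _ _ hmin hmax, outer _ _ hu hv]
    refine lintegral_mono fun x => ?_
    rw [inner _ _ hmin hmax x, inner _ _ hu hv x]
    refine lintegral_mono fun y => ?_
    simp only [hf]
    rw [← add_mul, ← add_mul, ← ENNReal.ofReal_add (by positivity) (by positivity),
      ← ENNReal.ofReal_add (by positivity) (by positivity)]
    exact mul_le_mul_left (ENNReal.ofReal_le_ofReal (key_ineq (u x) (u y) (v x) (v y))) _
  simp only [kineticEnergy]
  calc (1/2) * (∫⁻ x in U, ∫⁻ y in V, f (fun z => min (u z) (v z)) x y)
        + (1/2) * (∫⁻ x in U, ∫⁻ y in V, f (fun z => max (u z) (v z)) x y)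
      = (1/2) * ((∫⁻ x in U, ∫⁻ y in V, f (fun z => min (u z) (v z)) x y)
        + (∫⁻ x in U, ∫⁻ y in V, f (fun z => max (u z) (v z)) x y)) := by ring
    _ ≤ (1/2) * ((∫⁻ x in U, ∫⁻ y in V, f u x y) + (∫⁻ x in U, ∫⁻ y in V, f v x y)) :=
        mul_le_mul_right main _
    _ = (1/2) * (∫⁻ x in U, ∫⁻ y in V, f u x y) + (1/2) * (∫⁻ x in U, ∫⁻ y in V, f v x y) := by
        ring
end

section
/- Let E ⊆ ℝ^N be a set with the Birkhoff property with respect to a nonzero vector ω ∈ ℝ^N (i.e. τ_k E ⊆ E for all k ∈ ℤ^N with ω·k ≤ 0, and E ⊆ τ_k E for all k ∈ ℤ^N with ω·k ≥ 0). If E contains a ball of radius √N centered at a point x₀, then E contains the half-space {x ∈ ℝ^N : ω·(x - x₀) < 0}. -/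
theorem stmt3 {N : ℕ} (E : Set (EuclideanSpace ℝ (Fin N)))
    (ω : EuclideanSpace ℝ (Fin N)) (hω : ω ≠ 0)
    (hBirk₁ : ∀ k : Fin N → ℤ, (∑ i, ω i * (k i : ℝ)) ≤ 0 →
      (fun x => x + ((WithLp.equiv 2 (Fin N → ℝ)).symm fun i => (k i : ℝ))) '' E ⊆ E)
    (hBirk₂ : ∀ k : Fin N → ℤ, 0 ≤ (∑ i, ω i * (k i : ℝ)) →
      E ⊆ (fun x => x + ((WithLp.equiv 2 (Fin N → ℝ)).symm fun i => (k i : ℝ))) '' E)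
    (x₀ : EuclideanSpace ℝ (Fin N))
    (hball : Metric.ball x₀ (Real.sqrt N) ⊆ E) :
    {x : EuclideanSpace ℝ (Fin N) | (∑ i, ω i * (x i - x₀ i)) < 0} ⊆ E := by
  intro x hx
  simp only [Set.mem_setOf_eq] at hx
  rcases Nat.eq_zero_or_pos N with hN | hN
  · subst hN; simp at hx
  -- choose integer vector k
  set k : Fin N → ℤ := fun i => if 0 ≤ ω i then ⌊x i - x₀ i⌋ else ⌈x i - x₀ i⌉ with hk
  have hksum : (∑ i, ω i * (k i : ℝ)) ≤ 0 := by
    refine le_trans (Finset.sum_le_sum (fun i _ => ?_)) hx.le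
    by_cases h : 0 ≤ ω i
    · simp only [hk, if_pos h]
      exact mul_le_mul_of_nonneg_left (Int.floor_le _) h
    · simp only [hk, if_neg h]
      exact mul_le_mul_of_nonpos_left (Int.le_ceil _) (le_of_not_ge h)
  set kv : EuclideanSpace ℝ (Fin N) := (WithLp.equiv 2 (Fin N → ℝ)).symm fun i => (k i : ℝ)
  have hycoord : ∀ i, (x - kv) i = x i - (k i : ℝ) := fun i => rfl
  have hyball : x - kv ∈ Metric.ball x₀ (Real.sqrt N) := by
    rw [Metric.mem_ball, EuclideanSpace.dist_eq]
    have h1 : ∀ i, dist ((x - kv) i) (x₀ i) ^ 2 < 1 := by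
      intro i
      have habs : |x i - (k i : ℝ) - x₀ i| < 1 := by
        rw [abs_lt]
        constructor
        · by_cases h : 0 ≤ ω i
          · simp only [hk, if_pos h]
            nlinarith [Int.sub_one_lt_floor (x i - x₀ i), Int.floor_le (x i - x₀ i)]
          · simp only [hk, if_neg h]
            nlinarith [Int.ceil_lt_add_one (x i - x₀ i), Int.le_ceil (x i - x₀ i)]
        · by_cases h : 0 ≤ ω i
          · simp only [hk, if_pos h]
            nlinarith [Int.sub_one_lt_floor (x i - x₀ i), Int.floor_le (x i - x₀ i)]
          · simp only [hk, if_neg h]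
            nlinarith [Int.ceil_lt_add_one (x i - x₀ i), Int.le_ceil (x i - x₀ i)]
      have : dist ((x - kv) i) (x₀ i) = |x i - (k i : ℝ) - x₀ i| := by
        rw [hycoord, Real.dist_eq]
      rw [this]
      nlinarith [abs_nonneg (x i - (k i : ℝ) - x₀ i)]
    have hsum : (∑ i, dist ((x - kv) i) (x₀ i) ^ 2) < N := by
      have := Finset.sum_lt_sum_of_nonempty (s := (Finset.univ : Finset (Fin N)))
        (f := fun i => dist ((x - kv) i) (x₀ i) ^ 2) (g := fun _ => (1 : ℝ))
        (Finset.univ_nonempty_iff.2 ⟨⟨0, hN⟩⟩) (fun i _ => h1 i)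
      simpa using this
    exact Real.sqrt_lt_sqrt (Finset.sum_nonneg fun i _ => sq_nonneg _) hsum
  have hyE : x - kv ∈ E := hball hyball
  exact hBirk₁ k hksum ⟨x - kv, hyE, sub_add_cancel x kv⟩
end
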